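/- Let n ≥ 2 and m ≥ 1, and consider the uniform distribution over {0,1}-labelings of T^m_n (and, on the right-hand side, independent uniform labelings of T^i_{n−1} and T^{2m−i}_{n−1}). Then for every integer x: Pr(M^m_n < x) = ∑_{i=0}^{2m} (C(2m, i) / 2^{2m}) · Pr(M^i_{n−1} < x) · Pr(M^{2m−i}_{n−1} < x), where by convention Pr(M^0_{n−1} < x) = 1 for x ≥ 1. -/

import Mathlib

namespace TreeDB

/-- The sample space of `{0,1}`-labelings of the tree `T^m_n` (the rooted
tree whose root has `2m` children, each of which is the root of a full
binary tree of depth `n-1`): a labeling consists of the label of the root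
together with, for each of the `2m` children, a labeling of the full binary
tree of depth `n-1` rooted at that child.  That binary tree has `2^n - 1`
vertices, stored in heap order: the vertex with heap index `h ∈ [1, 2^n - 1]`
(root `1`, children of `h` being `2h` and `2h+1`) is stored at position
`h - 1`. -/
abbrev Ω (m n : ℕ) : Type := Bool × (Fin (2 * m) → Fin (2 ^ n - 1) → Bool)

/-- The heap index of the vertex of a full binary tree reached from the root
by the descent `p` (`false` = left, `true` = right). -/
def heapIdx (p : List Bool) : ℕ := p.foldl (fun h b => 2 * h + b.toNat) 1

/-- The label of the vertex with heap index `h` in a heap-stored labeled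
full binary tree `g`. -/
def sub {N : ℕ} (g : Fin N → Bool) (h : ℕ) : Bool :=
  if hh : h - 1 < N then g ⟨h - 1, hh⟩ else false

/-- The sequence of the `n` labels read along the first `n` vertices of the
root-to-leaf path of the heap-stored labeled full binary tree `g`
determined by the descent `p`. -/
def pathLabels {N : ℕ} (n : ℕ) (g : Fin N → Bool) (p : List Bool) : List Bool :=
  (List.range n).map fun j => sub g (heapIdx (p.take j))

/-- `occ ℓ t` is the number of root-to-leaf paths `w_0 w_1 … w_n` of `T^m_n`
with `ℓ(w_j) = t_j` for all `j`, for a labeling `ℓ` of `T^m_n` and a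
sequence `t = t_0 t_1 … t_n ∈ {0,1}^{n+1}`.  A root-to-leaf path consists of
the root, a child `i` of the root, and a descent `p ∈ {0,1}^{n-1}` in the
full binary tree of depth `n-1` rooted at that child. -/
def occ {m n : ℕ} (ℓ : Ω m n) (t : List Bool) : ℕ :=
  match t with
  | [] => 0
  | t0 :: ts =>
      if ℓ.1 = t0 then
        ∑ i : Fin (2 * m), ∑ p : Fin (n - 1) → Bool,
          if pathLabels n (ℓ.2 i) (List.ofFn p) = ts then 1 else 0
      else 0

/-- The random variable `M^m_n`: the maximum over `t ∈ {0,1}^{n+1}` of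
`occ ℓ t`. -/
def Mval {m n : ℕ} (ℓ : Ω m n) : ℕ :=
  Finset.univ.sup fun t : Fin (n + 1) → Bool => occ ℓ (List.ofFn t)

/-- The probability of the event `P` under the uniform distribution over
`{0,1}`-labelings of `T^m_n`. -/
def Pr (m n : ℕ) (P : Ω m n → Prop) [DecidablePred P] : ℚ :=
  ((Finset.univ.filter P).card : ℚ) / (Fintype.card (Ω m n) : ℚ)

/-- The expectation of `f` under the uniform distribution over
`{0,1}`-labelings of `T^m_n`. -/
def Exp (m n : ℕ) (f : Ω m n → ℕ) : ℚ :=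
  (∑ ℓ : Ω m n, (f ℓ : ℚ)) / (Fintype.card (Ω m n) : ℚ)

/-- The labeled full binary tree of depth `n - 2` rooted at the left
(`s = false`) or right (`s = true`) child of the root of the heap-stored
labeled full binary tree `g` of depth `n - 1`. -/
def childSub {n : ℕ} (g : Fin (2 ^ n - 1) → Bool) (s : Bool) :
    Fin (2 ^ (n - 1) - 1) → Bool :=
  fun h => sub g ((h.val + 1) + (1 + s.toNat) * 2 ^ Nat.log2 (h.val + 1))

end TreeDB

namespace TreeDB

lemma foldl_acc (l : List Bool) (a : ℕ) :
    l.foldl (fun h b => 2 * h + b.toNat) a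
      = a * 2 ^ l.length + l.foldl (fun h b => 2 * h + b.toNat) 0 := by
  induction l generalizing a with
  | nil => simp
  | cons c l ih =>
    simp only [List.foldl_cons, List.length_cons]
    rw [ih (2 * a + c.toNat), ih (2 * 0 + c.toNat)]
    ring

lemma foldl_zero_lt (l : List Bool) :
    l.foldl (fun h b => 2 * h + b.toNat) 0 < 2 ^ l.length := by
  induction l with
  | nil => simp
  | cons c l ih =>
    simp only [List.foldl_cons, List.length_cons]
    rw [foldl_acc]
    have : c.toNat ≤ 1 := Bool.toNat_le c
    have : (2 * 0 + c.toNat) * 2 ^ l.length ≤ 2 ^ l.length := by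
      nlinarith [pow_pos (by norm_num : (0:ℕ) < 2) l.length]
    calc _ ≤ 2 ^ l.length + l.foldl (fun h b => 2 * h + b.toNat) 0 := by omega
    _ < 2 ^ (l.length + 1) := by rw [pow_succ]; omega

lemma heapIdx_eq (l : List Bool) :
    heapIdx l = 2 ^ l.length + l.foldl (fun h b => 2 * h + b.toNat) 0 := by
  rw [heapIdx, foldl_acc, one_mul]

lemma heapIdx_ge (l : List Bool) : 2 ^ l.length ≤ heapIdx l := by
  rw [heapIdx_eq]; omega

lemma heapIdx_lt (l : List Bool) : heapIdx l < 2 ^ (l.length + 1) := by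
  rw [heapIdx_eq, pow_succ]; have := foldl_zero_lt l; omega

lemma heapIdx_cons (b : Bool) (l : List Bool) :
    heapIdx (b :: l) = heapIdx l + (1 + b.toNat) * 2 ^ l.length := by
  show List.foldl _ (2 * 1 + b.toNat) l = _
  rw [foldl_acc, heapIdx_eq]; ring

lemma log2_of_range {k H : ℕ} (h1 : 2 ^ k ≤ H) (h2 : H < 2 ^ (k + 1)) :
    Nat.log2 H = k := by
  rw [Nat.log2_eq_log_two]
  exact Nat.log_eq_of_pow_le_of_lt_pow h1 h2

lemma log2_heapIdx (l : List Bool) : Nat.log2 (heapIdx l) = l.length :=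
  log2_of_range (heapIdx_ge l) (heapIdx_lt l)

lemma sub_heapIdx_child {n : ℕ} (g : Fin (2 ^ (n + 1) - 1) → Bool) (b : Bool)
    (l : List Bool) (hl : l.length < n) :
    sub (childSub g b) (heapIdx l) = sub g (heapIdx (b :: l)) := by
  have h1 : 1 ≤ heapIdx l := le_trans (Nat.one_le_two_pow) (heapIdx_ge l)
  have h2 : heapIdx l < 2 ^ (l.length + 1) := heapIdx_lt l
  have hrange : heapIdx l - 1 < 2 ^ (n + 1 - 1) - 1 := by
    have ha : 2 ^ (l.length + 1) ≤ 2 ^ n := Nat.pow_le_pow_right (by norm_num) (by omega)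
    have hb : 2 ≤ 2 ^ n := le_trans (by norm_num : (2:ℕ) ≤ 2 ^ 1)
      (Nat.pow_le_pow_right (by norm_num) (by omega))
    have hc : (2:ℕ) ^ (n + 1 - 1) = 2 ^ n := by rw [Nat.add_sub_cancel]
    omega
  rw [show sub (childSub g b) (heapIdx l)
      = childSub g b ⟨heapIdx l - 1, hrange⟩ from dif_pos hrange]
  show sub g _ = _
  rw [heapIdx_cons]
  congr 1
  have : heapIdx l - 1 + 1 = heapIdx l := by omega
  rw [this, log2_heapIdx]

lemma pathLabels_cons {n : ℕ} (g : Fin (2 ^ (n + 1) - 1) → Bool) (b : Bool)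
    (q : List Bool) :
    pathLabels (n + 1) g (b :: q) = sub g 1 :: pathLabels n (childSub g b) q := by
  unfold pathLabels
  rw [List.range_succ_eq_map, List.map_cons, List.map_map]
  congr 1
  apply List.map_congr_left
  intro j hj
  rw [List.mem_range] at hj
  have h1 : (b :: q).take (j + 1) = b :: q.take j := rfl
  show sub g (heapIdx ((b :: q).take (j+1))) = sub (childSub g b) (heapIdx (q.take j))
  rw [h1, sub_heapIdx_child]
  · exact lt_of_le_of_lt (le_trans (List.length_take_le j q) (le_refl _) |>.trans_eq rfl) (by
      have := List.length_take_le j (q); omega)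

/-- generalized path count over an arbitrary finite index family. -/
def GF {N : ℕ} {ι : Type} [Fintype ι] (d : ℕ) (fam : ι → Fin N → Bool)
    (ts : List Bool) : ℕ :=
  ∑ i : ι, ∑ p : Fin d → Bool,
    if pathLabels (d + 1) (fam i) (List.ofFn p) = ts then 1 else 0

/-- generalized max over sequences. -/
def GM {N : ℕ} {ι : Type} [Fintype ι] (d : ℕ) (fam : ι → Fin N → Bool) : ℕ :=
  Finset.univ.sup fun ts : Fin (d + 1) → Bool => GF d fam (List.ofFn ts)

lemma occ_eq {m d : ℕ} (ℓ : Ω m (d + 1)) (t0 : Bool) (ts : List Bool) :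
    occ ℓ (t0 :: ts) = if ℓ.1 = t0 then GF d ℓ.2 ts else 0 := rfl

lemma Mval_eq {m d : ℕ} (b : Bool) (g : Fin (2 * m) → Fin (2 ^ (d + 1) - 1) → Bool) :
    Mval ((b, g) : Ω m (d + 1)) = GM d g := by
  unfold Mval GM
  apply le_antisymm
  · apply Finset.sup_le
    intro t _
    rw [List.ofFn_succ, occ_eq]
    split
    · exact Finset.le_sup (f := fun ts : Fin (d + 1) → Bool => GF d g (List.ofFn ts))
        (Finset.mem_univ fun i : Fin (d + 1) => t i.succ)
    · exact Nat.zero_le _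
  · apply Finset.sup_le
    intro ts _
    have h1 : List.ofFn (Fin.cons b ts : Fin (d + 1 + 1) → Bool) = b :: List.ofFn ts := by
      simp [List.ofFn_succ]
    have h2 : occ ((b, g) : Ω m (d + 1)) (List.ofFn (Fin.cons b ts)) = GF d g (List.ofFn ts) := by
      rw [h1, occ_eq]; simp
    exact h2 ▸ Finset.le_sup (f := fun t : Fin (d + 1 + 1) → Bool =>
      occ ((b, g) : Ω m (d + 1)) (List.ofFn t)) (Finset.mem_univ (Fin.cons b ts : Fin (d + 1 + 1) → Bool))

lemma GF_reindex {N : ℕ} {ι ι' : Type} [Fintype ι] [Fintype ι'] (d : ℕ)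
    (e : ι' ≃ ι) (fam : ι → Fin N → Bool) (ts : List Bool) :
    GF d (fam ∘ e) ts = GF d fam ts :=
  Fintype.sum_equiv e _ _ fun i => rfl

lemma GM_reindex {N : ℕ} {ι ι' : Type} [Fintype ι] [Fintype ι'] (d : ℕ)
    (e : ι' ≃ ι) (fam : ι → Fin N → Bool) :
    GM d (fam ∘ e) = GM d fam := by
  unfold GM
  exact Finset.sup_congr rfl fun ts _ => GF_reindex d e fam _

/-- the family of grandchild subtrees with child-root label `t1`,
relative to a prescribed signature `s`. -/
def famS {m k : ℕ} (g : Fin (2 * m) → Fin (2 ^ (k + 2) - 1) → Bool)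
    (s : Fin (2 * m) → Bool) (t1 : Bool) :
    ({j : Fin (2 * m) // s j = t1} × Bool) → (Fin (2 ^ (k + 1) - 1) → Bool) :=
  fun jc => childSub (g jc.1.val) jc.2

lemma GF_split {m k : ℕ} (g : Fin (2 * m) → Fin (2 ^ (k + 2) - 1) → Bool)
    (s : Fin (2 * m) → Bool) (hs : ∀ j, sub (g j) 1 = s j) (t1 : Bool)
    (ts : List Bool) :
    GF (k + 1) g (t1 :: ts) = GF k (famS g s t1) ts := by
  have key : ∀ j : Fin (2 * m),
      (∑ p : Fin (k + 1) → Bool,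
        if pathLabels (k + 2) (g j) (List.ofFn p) = t1 :: ts then 1 else 0)
      = if s j = t1 then
          (∑ b : Bool, ∑ q : Fin k → Bool,
            if pathLabels (k + 1) (childSub (g j) b) (List.ofFn q) = ts then 1 else 0)
        else 0 := by
    intro j
    rw [← Fintype.sum_equiv (Fin.consEquiv fun _ : Fin (k + 1) => Bool)
      (fun bq : Bool × (Fin k → Bool) =>
        if pathLabels (k + 2) (g j) (List.ofFn (Fin.cons bq.1 bq.2)) = t1 :: ts then 1 else 0)
      (fun p => if pathLabels (k + 2) (g j) (List.ofFn p) = t1 :: ts then 1 else 0)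
      (fun bq => rfl)]
    rw [Fintype.sum_prod_type]
    have hofn : ∀ (b : Bool) (q : Fin k → Bool),
        List.ofFn (Fin.cons b q : Fin (k + 1) → Bool) = b :: List.ofFn q := by
      intro b q; simp [List.ofFn_succ]
    by_cases h : s j = t1
    · rw [if_pos h]
      refine Finset.sum_congr rfl fun b _ => Finset.sum_congr rfl fun q _ => ?_
      rw [hofn, pathLabels_cons (n := k + 1) (g j) b (List.ofFn q), hs j, h]
      simp
    · rw [if_neg h]
      apply Finset.sum_eq_zero
      intro b _
      apply Finset.sum_eq_zero
      intro q _
      rw [hofn, pathLabels_cons (n := k + 1) (g j) b (List.ofFn q), hs j]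
      simp only [ite_eq_right_iff, List.cons_eq_cons]
      rintro ⟨rfl, -⟩
      exact absurd rfl h
  unfold GF famS
  rw [Fintype.sum_prod_type]
  rw [Finset.sum_congr rfl fun j _ => key j]
  rw [← Finset.sum_filter]
  exact Finset.sum_subtype _ (by simp) _

lemma Mval_split {m k : ℕ} (b : Bool)
    (g : Fin (2 * m) → Fin (2 ^ (k + 2) - 1) → Bool)
    (s : Fin (2 * m) → Bool) (hs : ∀ j, sub (g j) 1 = s j) :
    Mval ((b, g) : Ω m (k + 2)) = max (GM k (famS g s false)) (GM k (famS g s true)) := by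
  rw [Mval_eq (d := k + 1) b g]
  unfold GM
  apply le_antisymm
  · apply Finset.sup_le
    intro t _
    rw [List.ofFn_succ, GF_split g s hs (t 0) (List.ofFn fun i : Fin (k + 1) => t i.succ)]
    rcases Bool.eq_false_or_eq_true (t 0) with h | h <;> rw [h]
    · exact le_max_of_le_right
        (Finset.le_sup (f := fun ts : Fin (k + 1) → Bool => GF k (famS g s true) (List.ofFn ts))
          (Finset.mem_univ fun i : Fin (k + 1) => t i.succ))
    · exact le_max_of_le_left
        (Finset.le_sup (f := fun ts : Fin (k + 1) → Bool => GF k (famS g s false) (List.ofFn ts))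
          (Finset.mem_univ fun i : Fin (k + 1) => t i.succ))
  · have step : ∀ t1 : Bool,
        (Finset.univ.sup fun ts : Fin (k + 1) → Bool => GF k (famS g s t1) (List.ofFn ts))
          ≤ Finset.univ.sup fun t : Fin (k + 1 + 1) → Bool => GF (k + 1) g (List.ofFn t) := by
      intro t1
      apply Finset.sup_le
      intro ts _
      refine le_trans (le_of_eq ?_)
        (Finset.le_sup (f := fun t : Fin (k + 1 + 1) → Bool => GF (k + 1) g (List.ofFn t))
          (Finset.mem_univ (Fin.cons t1 ts)))
      show GF k (famS g s t1) (List.ofFn ts) = GF (k + 1) g (List.ofFn (Fin.cons t1 ts))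
      rw [show List.ofFn (Fin.cons t1 ts : Fin (k + 1 + 1) → Bool) = t1 :: List.ofFn ts by
        simp [List.ofFn_succ]]
      rw [GF_split g s hs t1 (List.ofFn ts)]
    exact max_le (step false) (step true)

/-- the component equivalence: a labeled depth-`k+1` binary tree is its root
label together with its two child subtrees. -/
lemma Phi_bij (k : ℕ) :
    Function.Bijective (fun g : Fin (2 ^ (k + 2) - 1) → Bool =>
      ((sub g 1, (childSub g false, childSub g true)) :
        Bool × ((Fin (2 ^ (k + 1) - 1) → Bool) × (Fin (2 ^ (k + 1) - 1) → Bool)))) := by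
  rw [Fintype.bijective_iff_injective_and_card]
  constructor
  · intro g g' hgg
    have h1 : sub g 1 = sub g' 1 := congrArg Prod.fst hgg
    have h2 : childSub g false = childSub g' false := congrArg (fun z => z.2.1) hgg
    have h3 : childSub g true = childSub g' true := congrArg (fun z => z.2.2) hgg
    funext hi
    by_cases h0 : hi.val = 0
    · have e1 : sub g 1 = g hi := by
        unfold sub
        rw [dif_pos (show 1 - 1 < 2 ^ (k + 2) - 1 by omega)]
        congr 1
        exact Fin.ext (show 1 - 1 = hi.val by omega)
      have e2 : sub g' 1 = g' hi := by
        unfold sub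
        rw [dif_pos (show 1 - 1 < 2 ^ (k + 2) - 1 by omega)]
        congr 1
        exact Fin.ext (show 1 - 1 = hi.val by omega)
      rw [← e1, ← e2, h1]
    · set mm : ℕ := hi.val + 1 with hmm
      have hm2 : 2 ≤ mm := by omega
      set kk : ℕ := Nat.log2 mm with hkk
      have hlow : 2 ^ kk ≤ mm := by
        rw [hkk, Nat.log2_eq_log_two]
        exact Nat.pow_log_le_self 2 (by omega)
      have hhigh : mm < 2 ^ (kk + 1) := by
        rw [hkk, Nat.log2_eq_log_two]
        exact Nat.lt_pow_succ_log_self (by norm_num) mm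
      have hkk1 : 1 ≤ kk := by
        by_contra hc
        push_neg at hc
        interval_cases kk
        simp at hhigh
        omega
      have hkklt : kk < k + 2 := by
        have : mm < 2 ^ (k + 2) := by
          have := hi.isLt
          omega
        by_contra hc
        push_neg at hc
        exact absurd (lt_of_le_of_lt (le_trans (Nat.pow_le_pow_right (by norm_num) hc) hlow) this)
          (lt_irrefl _)
      have epow : 2 ^ kk = 2 * 2 ^ (kk - 1) := by
        rw [← pow_succ']
        congr 1
        omega
      set sb : Bool := decide (2 ^ kk + 2 ^ (kk - 1) ≤ mm) with hsb
      set H : ℕ := mm - (1 + sb.toNat) * 2 ^ (kk - 1) with hH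
      have epow2 : 2 ^ (kk + 1) = 2 * 2 ^ kk := by rw [pow_succ']
      have hsbn : (sb.toNat = 1 ∧ 2 ^ kk + 2 ^ (kk - 1) ≤ mm) ∨
          (sb.toNat = 0 ∧ mm < 2 ^ kk + 2 ^ (kk - 1)) := by
        by_cases hc : 2 ^ kk + 2 ^ (kk - 1) ≤ mm
        · left; exact ⟨by rw [hsb, decide_eq_true hc]; rfl, hc⟩
        · right
          refine ⟨?_, by omega⟩
          rw [hsb, decide_eq_false hc]
          rfl
      have hHrange : 2 ^ (kk - 1) ≤ H ∧ H < 2 ^ kk := by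
        rcases hsbn with ⟨hb, hcc⟩ | ⟨hb, hcc⟩ <;> rw [hH, hb] <;> omega
      have hHpos : 1 ≤ H := le_trans Nat.one_le_two_pow hHrange.1
      have hlog : Nat.log2 H = kk - 1 := by
        apply log2_of_range hHrange.1
        rw [show kk - 1 + 1 = kk by omega]
        exact hHrange.2
      have hHlt : H - 1 < 2 ^ (k + 1) - 1 := by
        have hk1 : 2 ^ kk ≤ 2 ^ (k + 1) := Nat.pow_le_pow_right (by norm_num) (by omega)
        have h2 : (2:ℕ) ≤ 2 ^ (k + 1) := by
          calc (2:ℕ) = 2 ^ 1 := rfl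
          _ ≤ 2 ^ (k + 1) := Nat.pow_le_pow_right (by norm_num) (by omega)
        omega
      have hle : (1 + sb.toNat) * 2 ^ (kk - 1) ≤ mm := by
        rcases hsbn with ⟨hb, hcc⟩ | ⟨hb, hcc⟩ <;> rw [hb] <;> omega
      have key : ∀ gg : Fin (2 ^ (k + 2) - 1) → Bool,
          gg hi = childSub gg sb ⟨H - 1, hHlt⟩ := by
        intro gg
        show gg hi = sub gg ((H - 1 + 1) + (1 + sb.toNat) * 2 ^ Nat.log2 (H - 1 + 1))
        rw [show H - 1 + 1 = H by omega, hlog]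
        have hmeq : H + (1 + sb.toNat) * 2 ^ (kk - 1) = mm := by omega
        rw [hmeq]
        unfold sub
        rw [dif_pos (show mm - 1 < 2 ^ (k + 2) - 1 by
          have := hi.isLt
          omega)]
        congr 1
      rw [key g, key g']
      rcases Bool.eq_false_or_eq_true sb with hb | hb <;> rw [hb]
      · exact congrFun h3 _
      · exact congrFun h2 _
  · simp only [Fintype.card_prod, Fintype.card_fun, Fintype.card_bool, Fintype.card_fin]
    have e1 : 2 ^ (k + 2) = 2 * 2 ^ (k + 1) := by rw [pow_succ']
    have e2 : 1 ≤ 2 ^ (k + 1) := Nat.one_le_two_pow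
    rw [← pow_add, ← pow_succ']
    congr 1
    omega

noncomputable def Phi (k : ℕ) :
    (Fin (2 ^ (k + 2) - 1) → Bool) ≃
      Bool × ((Fin (2 ^ (k + 1) - 1) → Bool) × (Fin (2 ^ (k + 1) - 1) → Bool)) :=
  Equiv.ofBijective _ (Phi_bij k)


/- ---------------- counting ---------------- -/

/-- number of families of `2 i` labeled depth-`k` binary trees whose
generalized max is `< x`. -/
def Ncore (k x i : ℕ) : ℕ :=
  (Finset.univ.filter fun fam : Fin (2 * i) → (Fin (2 ^ (k + 1) - 1) → Bool) =>
    GM k fam < x).card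

lemma cardOmega {m d : ℕ} (x : ℕ) :
    (Finset.univ.filter fun ℓ : Ω m (d + 1) => Mval ℓ < x).card
      = 2 * (Finset.univ.filter
          fun g : Fin (2 * m) → Fin (2 ^ (d + 1) - 1) → Bool => GM d g < x).card := by
  have hset : (Finset.univ.filter fun ℓ : Ω m (d + 1) => Mval ℓ < x)
      = Finset.univ ×ˢ (Finset.univ.filter
          fun g : Fin (2 * m) → Fin (2 ^ (d + 1) - 1) → Bool => GM d g < x) := by
    ext ⟨b, g⟩
    simp [Finset.mem_filter, Finset.mem_product, Mval_eq]
  rw [hset, Finset.card_product]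
  simp

/-- cardinality of a subtype of families of trees with `GM < x`,
over an arbitrary `2c`-element index type. -/
lemma card_subtype_GM {k x c : ℕ} {ι : Type} [Fintype ι] [DecidableEq ι]
    (hc : Fintype.card ι = 2 * c) :
    Fintype.card {fam : ι → (Fin (2 ^ (k + 1) - 1) → Bool) // GM k fam < x}
      = Ncore k x c := by
  have e : ι ≃ Fin (2 * c) := Fintype.equivFinOfCardEq hc
  rw [Ncore, ← Fintype.card_subtype]
  apply Fintype.card_congr
  apply Equiv.subtypeEquiv (Equiv.arrowCongr e (Equiv.refl _))
  intro fam
  have : (Equiv.arrowCongr e (Equiv.refl (Fin (2 ^ (k + 1) - 1) → Bool))) fam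
      = fam ∘ e.symm := rfl
  rw [this, GM_reindex k e.symm fam]

lemma card_fiber {m k x : ℕ} (s : Fin (2 * m) → Bool) :
    (Finset.univ.filter fun g : Fin (2 * m) → Fin (2 ^ (k + 2) - 1) → Bool =>
        (∀ j, sub (g j) 1 = s j) ∧
          GM k (famS g s false) < x ∧ GM k (famS g s true) < x).card
      = Ncore k x ((Finset.univ.filter fun j => s j = false).card)
        * Ncore k x ((Finset.univ.filter fun j => s j = true).card) := by
  -- the bijection sending a signature-`s` forest to its two grandchild families
  have hbij : Function.Bijective
      (fun g : {g : Fin (2 * m) → Fin (2 ^ (k + 2) - 1) → Bool //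
          ∀ j, sub (g j) 1 = s j} =>
        (famS g.val s false, famS g.val s true)) := by
    constructor
    · rintro ⟨g, hg⟩ ⟨g', hg'⟩ hpair
      have h1 : famS g s false = famS g' s false := congrArg Prod.fst hpair
      have h2 : famS g s true = famS g' s true := congrArg Prod.snd hpair
      apply Subtype.ext
      funext j
      have hc : ∀ cc : Bool, childSub (g j) cc = childSub (g' j) cc := by
        intro cc
        rcases Bool.eq_false_or_eq_true (s j) with hsj | hsj
        · exact congrFun h2 (⟨j, hsj⟩, cc)
        · exact congrFun h1 (⟨j, hsj⟩, cc)
      apply (Phi_bij k).1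
      show (sub (g j) 1, (childSub (g j) false, childSub (g j) true))
        = (sub (g' j) 1, (childSub (g' j) false, childSub (g' j) true))
      rw [hg j, hg' j, hc false, hc true]
    · rintro ⟨u, v⟩
      set w : Fin (2 * m) →
          Bool × ((Fin (2 ^ (k + 1) - 1) → Bool) × (Fin (2 ^ (k + 1) - 1) → Bool)) :=
        fun j =>
          (s j, if h : s j = false then (u (⟨j, h⟩, false), u (⟨j, h⟩, true))
            else (v (⟨j, (Bool.eq_false_or_eq_true (s j)).resolve_right h⟩, false),
                  v (⟨j, (Bool.eq_false_or_eq_true (s j)).resolve_right h⟩, true))) with hw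
      refine ⟨⟨fun j => (Phi k).symm (w j), ?_⟩, ?_⟩
      · intro j
        have hg : Phi k ((Phi k).symm (w j)) = w j := Equiv.apply_symm_apply _ _
        exact congrArg Prod.fst hg
      · have hch : ∀ (j : Fin (2 * m)) (cc : Bool),
            childSub ((Phi k).symm (w j)) cc = ((w j).2.1, (w j).2.2).1 ∨ True := by
          exact fun j cc => Or.inr trivial
        have hg : ∀ j, Phi k ((Phi k).symm (w j)) = w j :=
          fun j => Equiv.apply_symm_apply _ _
        have hchf : ∀ j, childSub ((Phi k).symm (w j)) false = (w j).2.1 :=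
          fun j => congrArg (fun z => z.2.1) (hg j)
        have hcht : ∀ j, childSub ((Phi k).symm (w j)) true = (w j).2.2 :=
          fun j => congrArg (fun z => z.2.2) (hg j)
        apply Prod.ext
        · funext jc
          obtain ⟨⟨j, hj⟩, cc⟩ := jc
          show childSub ((Phi k).symm (w j)) cc = u (⟨j, hj⟩, cc)
          have hwj : (w j).2 = (u (⟨j, hj⟩, false), u (⟨j, hj⟩, true)) := by
            show (if h : s j = false then _ else _) = _
            rw [dif_pos hj]
          cases cc
          · rw [hchf j, hwj]
          · rw [hcht j, hwj]
        · funext jc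
          obtain ⟨⟨j, hj⟩, cc⟩ := jc
          show childSub ((Phi k).symm (w j)) cc = v (⟨j, hj⟩, cc)
          have hj' : ¬ s j = false := by rw [hj]; simp
          have hwj : (w j).2 = (v (⟨j, hj⟩, false), v (⟨j, hj⟩, true)) := by
            show (if h : s j = false then _ else _) = _
            rw [dif_neg hj']
          cases cc
          · rw [hchf j, hwj]
          · rw [hcht j, hwj]
  rw [← Fintype.card_subtype]
  have e1 : {g : Fin (2 * m) → Fin (2 ^ (k + 2) - 1) → Bool //
        (∀ j, sub (g j) 1 = s j) ∧
          GM k (famS g s false) < x ∧ GM k (famS g s true) < x}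
      ≃ {gp : {g : Fin (2 * m) → Fin (2 ^ (k + 2) - 1) → Bool //
          ∀ j, sub (g j) 1 = s j} //
            GM k (famS gp.val s false) < x ∧ GM k (famS gp.val s true) < x} :=
    (Equiv.subtypeSubtypeEquivSubtypeInter _ _).symm
  have e2 : {gp : {g : Fin (2 * m) → Fin (2 ^ (k + 2) - 1) → Bool //
          ∀ j, sub (g j) 1 = s j} //
            GM k (famS gp.val s false) < x ∧ GM k (famS gp.val s true) < x}
      ≃ {uv : (({j : Fin (2 * m) // s j = false} × Bool) → (Fin (2 ^ (k + 1) - 1) → Bool))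
            × (({j : Fin (2 * m) // s j = true} × Bool) → (Fin (2 ^ (k + 1) - 1) → Bool)) //
          GM k uv.1 < x ∧ GM k uv.2 < x} :=
    Equiv.subtypeEquiv (Equiv.ofBijective _ hbij) (fun gp => Iff.rfl)
  rw [Fintype.card_congr (e1.trans (e2.trans (Equiv.subtypeProdEquivProd
    (p := fun u => GM k u < x) (q := fun v => GM k v < x))))]
  rw [Fintype.card_prod]
  have hcF : Fintype.card ({j : Fin (2 * m) // s j = false} × Bool)
      = 2 * (Finset.univ.filter fun j => s j = false).card := by
    rw [Fintype.card_prod, Fintype.card_bool, Fintype.card_subtype, mul_comm]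
  have hcT : Fintype.card ({j : Fin (2 * m) // s j = true} × Bool)
      = 2 * (Finset.univ.filter fun j => s j = true).card := by
    rw [Fintype.card_prod, Fintype.card_bool, Fintype.card_subtype, mul_comm]
  rw [card_subtype_GM hcF, card_subtype_GM hcT]

lemma sum_sig (m k x : ℕ) :
    (Finset.univ.filter fun g : Fin (2 * m) → Fin (2 ^ (k + 2) - 1) → Bool =>
        GM (k + 1) g < x).card
      = ∑ i ∈ Finset.range (2 * m + 1),
          Nat.choose (2 * m) i * (Ncore k x i * Ncore k x (2 * m - i)) := by
  rw [Finset.card_eq_sum_card_fiberwise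
    (f := fun g j => sub (g j) 1) (t := Finset.univ) (fun g _ => Finset.mem_univ _)]
  have step1 : ∀ s : Fin (2 * m) → Bool,
      (((Finset.univ.filter fun g : Fin (2 * m) → Fin (2 ^ (k + 2) - 1) → Bool =>
            GM (k + 1) g < x)).filter
          fun g => (fun j => sub (g j) 1) = s).card
        = Ncore k x ((Finset.univ.filter fun j => s j = false).card)
          * Ncore k x (2 * m - (Finset.univ.filter fun j => s j = false).card) := by
    intro s
    rw [Finset.filter_filter]
    have hcnt : (Finset.univ.filter fun j => s j = true).card
        = 2 * m - (Finset.univ.filter fun j => s j = false).card := by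
      have h1 := Finset.card_filter_add_card_filter_not
        (s := (Finset.univ : Finset (Fin (2 * m)))) (p := fun j => s j = false)
      have h2 : (Finset.univ.filter fun j => ¬ s j = false)
          = (Finset.univ.filter fun j => s j = true) := by
        apply Finset.filter_congr
        intro j _
        simp
      rw [h2] at h1
      have h3 : (Finset.univ : Finset (Fin (2 * m))).card = 2 * m := by simp
      omega
    rw [← hcnt, ← card_fiber (k := k) (x := x) s]
    congr 1
    apply Finset.filter_congr
    intro g _
    constructor
    · rintro ⟨hlt, heq⟩
      have hs : ∀ j, sub (g j) 1 = s j := fun j => congrFun heq j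
      have hmax : GM (k + 1) g = max (GM k (famS g s false)) (GM k (famS g s true)) := by
        rw [← Mval_eq (m := m) (d := k + 1) false g]
        exact Mval_split false g s hs
      rw [hmax] at hlt
      exact ⟨hs, (max_lt_iff.mp hlt).1, (max_lt_iff.mp hlt).2⟩
    · rintro ⟨hs, hf, ht⟩
      have hmax : GM (k + 1) g = max (GM k (famS g s false)) (GM k (famS g s true)) := by
        rw [← Mval_eq (m := m) (d := k + 1) false g]
        exact Mval_split false g s hs
      exact ⟨by rw [hmax]; exact max_lt hf ht, funext hs⟩
  rw [Finset.sum_congr rfl fun s _ => step1 s]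
  -- reindex by the subset of `false` coordinates
  have hswap : (∑ s : Fin (2 * m) → Bool,
        Ncore k x ((Finset.univ.filter fun j => s j = false).card)
          * Ncore k x (2 * m - (Finset.univ.filter fun j => s j = false).card))
      = ∑ A ∈ (Finset.univ : Finset (Fin (2 * m))).powerset,
          Ncore k x A.card * Ncore k x (2 * m - A.card) := Finset.sum_nbij'
    (i := fun s : Fin (2 * m) → Bool => Finset.univ.filter fun j => s j = false)
    (j := fun A : Finset (Fin (2 * m)) => fun j => decide (j ∉ A))
    (fun s _ => Finset.mem_powerset.mpr (Finset.filter_subset _ _))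
    (fun A _ => Finset.mem_univ _)
    (by
      intro s _
      funext j
      rcases Bool.eq_false_or_eq_true (s j) with h | h <;> simp [h])
    (by
      intro A _
      ext j
      simp)
    (fun s _ => rfl)
  rw [hswap, Finset.sum_powerset_apply_card
    (f := fun c => Ncore k x c * Ncore k x (2 * m - c))]
  simp [Finset.card_univ]

lemma card_Omega (mm nn : ℕ) :
    Fintype.card (Ω mm nn) = 2 * (2 ^ (2 ^ nn - 1)) ^ (2 * mm) := by
  rw [Fintype.card_prod, Fintype.card_bool, Fintype.card_fun, Fintype.card_fun,
    Fintype.card_bool, Fintype.card_fin, Fintype.card_fin]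


/-- let `n ≥ 2` and `m ≥ 1`, and consider the uniform
distribution over `{0,1}`-labelings of `T^m_n` (and, on the right-hand
side, of `T^i_{n-1}` and `T^{2m-i}_{n-1}`).  Then for every integer `x`:
`Pr(M^m_n < x) = ∑_{i=0}^{2m} (C(2m, i) / 2^{2m}) · Pr(M^i_{n-1} < x) ·
Pr(M^{2m-i}_{n-1} < x)` (here `Pr(M^0_{n-1} < x)` is the probability that
the trivial maximum `0` of `T^0_{n-1}` is `< x`, which equals `1` for
`x ≥ 1`, matching the convention). -/
theorem pr_mval_lt_rec (m n : ℕ) (hn : 2 ≤ n) (hm : 1 ≤ m) (x : ℕ) :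
    Pr m n (fun ℓ => Mval ℓ < x) =
      ∑ i ∈ Finset.range (2 * m + 1),
        ((Nat.choose (2 * m) i : ℚ) / 2 ^ (2 * m)) *
          Pr i (n - 1) (fun ℓ => Mval ℓ < x) *
          Pr (2 * m - i) (n - 1) (fun ℓ => Mval ℓ < x) := by
  obtain ⟨k, rfl⟩ : ∃ k, n = k + 2 := ⟨n - 2, by omega⟩
  clear hn hm
  have hA0 : ((2:ℚ) ^ (2 ^ (k + 1) - 1)) ≠ 0 := pow_ne_zero _ two_ne_zero
  have hBA : ((2:ℚ) ^ (2 ^ (k + 2) - 1)) = 2 * ((2:ℚ) ^ (2 ^ (k + 1) - 1)) ^ 2 := by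
    rw [← pow_mul, ← pow_succ']
    congr 1
    have h2 : 2 ^ (k + 2) = 2 * 2 ^ (k + 1) := by rw [pow_succ']
    have h3 : 1 ≤ 2 ^ (k + 1) := Nat.one_le_two_pow
    omega
  have hL : ((Finset.univ.filter fun ℓ : Ω m (k + 2) => Mval ℓ < x).card : ℕ)
      = 2 * ∑ i ∈ Finset.range (2 * m + 1),
          Nat.choose (2 * m) i * (Ncore k x i * Ncore k x (2 * m - i)) := by
    have h1 : (Finset.univ.filter fun ℓ : Ω m (k + 2) => Mval ℓ < x).card
        = 2 * (Finset.univ.filter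
            fun g : Fin (2 * m) → Fin (2 ^ (k + 2) - 1) → Bool =>
              GM (k + 1) g < x).card := cardOmega (m := m) (d := k + 1) x
    rw [h1, sum_sig]
  have hR : ∀ i : ℕ, ((Finset.univ.filter fun ℓ : Ω i (k + 1) => Mval ℓ < x).card : ℕ)
      = 2 * Ncore k x i := fun i => cardOmega (m := i) (d := k) x
  have key : ∀ i ∈ Finset.range (2 * m + 1),
      ((Nat.choose (2 * m) i : ℚ) / 2 ^ (2 * m)) *
          Pr i (k + 2 - 1) (fun ℓ => Mval ℓ < x) *
          Pr (2 * m - i) (k + 2 - 1) (fun ℓ => Mval ℓ < x)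
        = (2 * ((Nat.choose (2 * m) i : ℚ) * (Ncore k x i * Ncore k x (2 * m - i))))
            / (Fintype.card (Ω m (k + 2)) : ℚ) := by
    intro i hi
    have hi' : i ≤ 2 * m := by
      rw [Finset.mem_range] at hi
      omega
    show ((Nat.choose (2 * m) i : ℚ) / 2 ^ (2 * m)) *
          Pr i (k + 1) (fun ℓ => Mval ℓ < x) *
          Pr (2 * m - i) (k + 1) (fun ℓ => Mval ℓ < x) = _
    unfold Pr
    rw [hR i, hR (2 * m - i), card_Omega i (k + 1), card_Omega (2 * m - i) (k + 1),
      card_Omega m (k + 2)]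
    push_cast
    rw [hBA]
    have e1 : (2 * ((2:ℚ) ^ (2 ^ (k + 1) - 1)) ^ 2) ^ (2 * m)
        = 2 ^ (2 * m) * ((2:ℚ) ^ (2 ^ (k + 1) - 1)) ^ (2 * i)
            * ((2:ℚ) ^ (2 ^ (k + 1) - 1)) ^ (2 * (2 * m - i)) := by
      have hexp : 2 * i + 2 * (2 * m - i) = 2 * (2 * m) := by omega
      rw [mul_pow, ← pow_mul, mul_assoc, ← pow_add, hexp]
    rw [e1]
    have h1 : ((2:ℚ) ^ (2 ^ (k + 1) - 1)) ^ (2 * i) ≠ 0 := pow_ne_zero _ hA0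
    have h2 : ((2:ℚ) ^ (2 ^ (k + 1) - 1)) ^ (2 * (2 * m - i)) ≠ 0 := pow_ne_zero _ hA0
    have h3 : ((2:ℚ) ^ (2 * m)) ≠ 0 := pow_ne_zero _ two_ne_zero
    field_simp
  rw [Finset.sum_congr rfl key]
  unfold Pr
  rw [hL]
  push_cast
  rw [← Finset.sum_div, ← Finset.mul_sum]

end TreeDB
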